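/- arXiv:2005.07755 — 4 statements merged into one kernel-verified Lean document; each statement's English description precedes it below -/
import Mathlib

section
/- For all positive integers t and T with 1 ≤ t ≤ T-1, the sum ∑_{s=t}^{T-1} 1/(s(s+1)(s+2)^2) is at most 1/(4t(t+1)). -/
lemma aux_tele (t : ℕ) (ht : 1 ≤ t) : ∀ n, t ≤ n →
    ∑ s ∈ Finset.Icc t n, (1 : ℝ) / ((s : ℝ) * ((s : ℝ) + 1) * ((s : ℝ) + 2) ^ 2)
      ≤ 1 / (4 * (t : ℝ) * ((t : ℝ) + 1)) - 1 / (4 * ((n : ℝ) + 1) * ((n : ℝ) + 2)) := by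
  intro n hn
  induction n, hn using Nat.le_induction with
  | base =>
    rw [Finset.Icc_self, Finset.sum_singleton]
    have htR : (1 : ℝ) ≤ (t : ℝ) := by exact_mod_cast ht
    rw [div_sub_div _ _ (by positivity) (by positivity), div_le_div_iff₀ (by positivity) (by positivity)]
    nlinarith [mul_nonneg (sq_nonneg ((t:ℝ)*((t:ℝ)+1))) (show (0:ℝ) ≤ (t:ℝ)+2 by linarith)]
  | succ n hn ih =>
    rw [Finset.sum_Icc_succ_top (by omega)]
    have htn : (1 : ℝ) ≤ (n : ℝ) := by
      have : 1 ≤ n := le_trans ht hn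
      exact_mod_cast this
    push_cast
    have key : (1 : ℝ) / (((n:ℝ)+1) * (((n:ℝ)+1) + 1) * (((n:ℝ)+1) + 2) ^ 2)
        ≤ 1 / (4 * ((n : ℝ) + 1) * ((n : ℝ) + 2)) - 1 / (4 * (((n:ℝ)+1) + 1) * (((n:ℝ)+1) + 2)) := by
      rw [div_sub_div _ _ (by positivity) (by positivity), div_le_div_iff₀ (by positivity) (by positivity)]
      nlinarith [mul_nonneg (sq_nonneg (((n:ℝ)+1)*((n:ℝ)+2))) (show (0:ℝ) ≤ (n:ℝ)+3 by linarith)]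
    linarith [ih]

theorem sum_inv_cubic_bound (t T : ℕ) (ht : 1 ≤ t) (htT : t ≤ T - 1) :
    ∑ s ∈ Finset.Icc t (T - 1),
        (1 : ℝ) / ((s : ℝ) * ((s : ℝ) + 1) * ((s : ℝ) + 2) ^ 2)
      ≤ 1 / (4 * (t : ℝ) * ((t : ℝ) + 1)) := by
  have h := aux_tele t ht (T - 1) htT
  have hpos : 0 < 1 / (4 * ((T - 1 : ℕ) : ℝ) + 4) := by positivity
  have : (0:ℝ) ≤ 1 / (4 * (((T-1 : ℕ)) : ℝ) + 1 + 1) := by positivity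
  have h2 : (0:ℝ) < 1 / (4 * (((T-1:ℕ):ℝ) + 1) * (((T-1:ℕ):ℝ) + 2)) := by positivity
  linarith
end

section
/- Let sequences x_t, y_t, z_t in ℝ^d satisfy y_0 = x_0 and the recursions z_t = (1 - α_{t+1}) y_t + α_{t+1} x_t, y_{t+1} = z_t + (β/λ_t)(x_{t+1} - x_t), with α_t = 2/(t+1). Then for all t ≥ 0, y_t - x_t = -Γ_t ∑_{s=1}^{t} ((λ_{s-1} - β)/(Γ_s λ_{s-1})) (x_s - x_{s-1}), where Γ_t = 2/(t(t+1)) and the empty sum at t = 0 is zero. -/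
theorem momentum_diff_formula_diminishing {d : ℕ}
    (x y z : ℕ → EuclideanSpace ℝ (Fin d))
    (β : ℝ) (hβ : 0 < β) (lam : ℕ → ℝ) (hlam : ∀ t, 0 < lam t)
    (α : ℕ → ℝ) (hα : ∀ t, α t = 2 / ((t : ℝ) + 1))
    (Γ : ℕ → ℝ) (hΓ : ∀ t, Γ t = 2 / ((t : ℝ) * ((t : ℝ) + 1)))
    (h0 : y 0 = x 0)
    (hz : ∀ t, z t = (1 - α (t + 1)) • y t + α (t + 1) • x t)
    (hy : ∀ t, y (t + 1) = z t + (β / lam t) • (x (t + 1) - x t)) :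
    ∀ t, y t - x t =
      -(Γ t • ∑ s ∈ Finset.Icc 1 t,
          ((lam (s - 1) - β) / (Γ s * lam (s - 1))) • (x s - x (s - 1))) := by
  intro t
  induction t with
  | zero => simp [h0]
  | succ n ih =>
    have hlamn := (hlam n).ne'
    rw [Finset.sum_Icc_succ_top (Nat.le_add_left 1 n)]
    simp only [Nat.add_sub_cancel]
    have expand : y (n + 1) - x (n + 1) =
        (1 - α (n + 1)) • (y n - x n) + (β / lam n - 1) • (x (n + 1) - x n) := by
      rw [hy n, hz n]; module
    have key : (1 - α (n + 1)) • (y n - x n) =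
        -(Γ (n + 1) • ∑ s ∈ Finset.Icc 1 n,
          ((lam (s - 1) - β) / (Γ s * lam (s - 1))) • (x s - x (s - 1))) := by
      rcases Nat.eq_zero_or_pos n with h | h
      · subst h; simp [h0]
      · rw [ih]
        have hn : (1 : ℝ) ≤ (n : ℝ) := by exact_mod_cast h
        have hs : (1 - α (n + 1)) * Γ n = Γ (n + 1) := by
          rw [hα, hΓ, hΓ]
          push_cast
          have h1 : (n : ℝ) ≠ 0 := by linarith
          have h2 : (n : ℝ) + 1 ≠ 0 := by linarith
          have h3 : (n : ℝ) + 1 + 1 ≠ 0 := by linarith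
          field_simp
          ring
        rw [smul_neg, smul_smul, hs]
    have hc : Γ (n + 1) * ((lam n - β) / (Γ (n + 1) * lam n)) = -(β / lam n - 1) := by
      have hΓ1 : Γ (n + 1) ≠ 0 := by
        rw [hΓ]; push_cast; positivity
      field_simp
      ring
    rw [expand, key, smul_add, smul_smul, hc]
    module
end

section
/- Under the setup of the momentum recursion with diminishing momentum α_t = 2/(t+1), the iterates satisfy ‖y_t - x_t‖² ≤ Γ_t ∑_{s=1}^{t} ((λ_{s-1} - β)²/(α_s Γ_s λ_{s-1}²)) ‖x_s - x_{s-1}‖², where Γ_t = 2/(t(t+1)). -/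
/-- Jensen-type inequality: if the positive weights `w` sum to 1, then
`‖∑ v i‖² ≤ ∑ ‖v i‖²/w i`. -/
lemma jensen_norm_sq {ι : Type*} {E : Type*} [NormedAddCommGroup E]
    (S : Finset ι) (v : ι → E) (w : ι → ℝ) (hw : ∀ i ∈ S, 0 < w i)
    (hsum : ∑ i ∈ S, w i = 1) :
    ‖∑ i ∈ S, v i‖ ^ 2 ≤ ∑ i ∈ S, ‖v i‖ ^ 2 / w i := by
  calc ‖∑ i ∈ S, v i‖ ^ 2 ≤ (∑ i ∈ S, ‖v i‖) ^ 2 := by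
        apply pow_le_pow_left₀ (norm_nonneg _) (norm_sum_le _ _)
    _ = (∑ i ∈ S, ‖v i‖) ^ 2 / ∑ i ∈ S, w i := by rw [hsum, div_one]
    _ ≤ ∑ i ∈ S, ‖v i‖ ^ 2 / w i := Finset.sq_sum_div_le_sum_sq_div S _ hw

lemma gauss_Icc (n : ℕ) : ∑ i ∈ Finset.Icc 1 n, (i : ℝ) = n * (n + 1) / 2 := by
  induction n with
  | zero => simp
  | succ m ih =>
    rw [← Finset.insert_Icc_right_eq_Icc_add_one (by omega), Finset.sum_insert (by simp), ih]
    push_cast; ring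

theorem momentum_diff_bound_diminishing {d : ℕ}
    (x y z : ℕ → EuclideanSpace ℝ (Fin d))
    (β : ℝ) (hβ : 0 < β) (lam : ℕ → ℝ) (hlam : ∀ t, 0 < lam t)
    (α : ℕ → ℝ) (hα : ∀ t, α t = 2 / ((t : ℝ) + 1))
    (Γ : ℕ → ℝ) (hΓ : ∀ t, Γ t = 2 / ((t : ℝ) * ((t : ℝ) + 1)))
    (h0 : y 0 = x 0)
    (hz : ∀ t, z t = (1 - α (t + 1)) • y t + α (t + 1) • x t)
    (hy : ∀ t, y (t + 1) = z t + (β / lam t) • (x (t + 1) - x t)) :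
    ∀ t, ‖y t - x t‖ ^ 2 ≤
      Γ t * ∑ s ∈ Finset.Icc 1 t,
        (lam (s - 1) - β) ^ 2 / (α s * Γ s * lam (s - 1) ^ 2) * ‖x s - x (s - 1)‖ ^ 2 := by
  -- closed form for y t - x t
  have key : ∀ t, y t - x t =
      -((Γ t) • ∑ s ∈ Finset.Icc 1 t,
        ((lam (s - 1) - β) / (Γ s * lam (s - 1))) • (x s - x (s - 1))) := by
    intro t
    induction t with
    | zero => rw [h0]; simp
    | succ t ih =>
      have hlt : lam t ≠ 0 := (hlam t).ne'
      have hrec : y (t + 1) - x (t + 1) =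
          (1 - α (t + 1)) • (y t - x t)
            - ((lam t - β) / lam t) • (x (t + 1) - x t) := by
        rw [hy, hz]
        have hl : (lam t - β) / lam t = 1 - β / lam t := by
          field_simp
        rw [hl]
        module
      have hsum : Finset.Icc 1 (t + 1) = insert (t + 1) (Finset.Icc 1 t) :=
        (Finset.insert_Icc_right_eq_Icc_add_one (by omega)).symm
      have hstep : (1 - α (t + 1)) • (y t - x t) =
          -((Γ (t + 1)) • ∑ s ∈ Finset.Icc 1 t,
            ((lam (s - 1) - β) / (Γ s * lam (s - 1))) • (x s - x (s - 1))) := by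
        rw [ih, smul_neg, smul_smul]
        rcases Nat.eq_zero_or_pos t with h | h
        · subst h; simp
        · have ht : (0 : ℝ) < (t : ℝ) := by exact_mod_cast h
          have hscal : (1 - α (t + 1)) * Γ t = Γ (t + 1) := by
            rw [hα, hΓ, hΓ]
            push_cast
            field_simp
            ring
          rw [hscal]
      have hΓne : Γ (t + 1) ≠ 0 := by
        rw [hΓ]; push_cast; positivity
      have hΓc : Γ (t + 1) * ((lam t - β) / (Γ (t + 1) * lam t))
          = (lam t - β) / lam t := by
        rw [← mul_div_assoc, mul_div_mul_left _ _ hΓne]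
      rw [hrec, hstep, hsum, Finset.sum_insert (by simp), smul_add]
      simp only [Nat.add_sub_cancel]
      rw [smul_smul, hΓc]
      abel
  intro t
  rcases Nat.eq_zero_or_pos t with h | h
  · subst h; rw [h0]; simp
  have htR : (0 : ℝ) < (t : ℝ) := by exact_mod_cast h
  have hΓt : 0 < Γ t := by rw [hΓ]; positivity
  rw [key, norm_neg, Finset.smul_sum]
  set Δ : ℕ → EuclideanSpace ℝ (Fin d) := fun s => x s - x (s - 1) with hΔ
  have hjen := jensen_norm_sq (Finset.Icc 1 t)
      (fun s => (Γ t • ((lam (s - 1) - β) / (Γ s * lam (s - 1))) • Δ s))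
      (fun s => Γ t * s)
      (fun s hs => by
        have hs1 : 1 ≤ s := (Finset.mem_Icc.mp hs).1
        have : (0 : ℝ) < (s : ℝ) := by exact_mod_cast hs1
        positivity)
      (by
        rw [← Finset.mul_sum, gauss_Icc, hΓ]
        field_simp)
  refine hjen.trans_eq ?_
  rw [Finset.mul_sum]
  apply Finset.sum_congr rfl
  intro s hs
  have hs1 : 1 ≤ s := (Finset.mem_Icc.mp hs).1
  have hsR : (0 : ℝ) < (s : ℝ) := by exact_mod_cast hs1
  have hls : 0 < lam (s - 1) := hlam _
  rw [norm_smul, norm_smul, mul_pow, mul_pow]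
  simp only [Real.norm_eq_abs, sq_abs]
  simp only [hα, hΓ]
  have h1 : (0:ℝ) < (s:ℝ) + 1 := by positivity
  field_simp
  ring
end

section
/- Under the constant-momentum recursion with α ∈ (0,1], the iterates satisfy ‖y_t - x_t‖² ≤ (t/(t+1)) ∑_{s=1}^{t} (1-α)^{2(t-s)} (t-s+1)(t-s+2) ((β - λ_{s-1})²/λ_{s-1}²) ‖x_s - x_{s-1}‖². -/
lemma reindex_aux {M : Type*} [AddCommMonoid M] :
    ∀ (t : ℕ) (f : ℕ → M), ∑ s ∈ Finset.Icc 1 t, f (t - s) = ∑ k ∈ Finset.range t, f k := by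
  intro t
  induction t with
  | zero => intro f; simp
  | succ n ih =>
    intro f
    rw [Finset.sum_Icc_succ_top (by omega), Finset.sum_range_succ']
    simp only [Nat.sub_self]
    congr 1
    rw [← ih (fun m => f (m + 1))]
    apply Finset.sum_congr rfl
    intro s hs
    simp only [Finset.mem_Icc] at hs
    congr 1
    omega

lemma tele_sum : ∀ t : ℕ, ∑ k ∈ Finset.range t, (1:ℝ)/(((k:ℝ)+1)*((k:ℝ)+2)) = t/(t+1) := by
  intro t
  induction t with
  | zero => simp
  | succ n ih =>
    rw [Finset.sum_range_succ, ih]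
    have h1 : (n:ℝ)+1 ≠ 0 := by positivity
    have h2 : (n:ℝ)+2 ≠ 0 := by positivity
    push_cast
    field_simp
    ring

theorem momentum_diff_bound_constant {d : ℕ}
    (x y z : ℕ → EuclideanSpace ℝ (Fin d))
    (α : ℝ) (hα0 : 0 < α) (hα1 : α ≤ 1)
    (β : ℝ) (hβ : 0 < β) (lam : ℕ → ℝ) (hlam : ∀ t, 0 < lam t)
    (h0 : y 0 = x 0)
    (hz : ∀ t, z t = (1 - α) • y t + α • x t)
    (hy : ∀ t, y (t + 1) = z t + (β / lam t) • (x (t + 1) - x t)) :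
    ∀ t, ‖y t - x t‖ ^ 2 ≤
      (t : ℝ) / ((t : ℝ) + 1) * ∑ s ∈ Finset.Icc 1 t,
        (1 - α) ^ (2 * (t - s)) * (((t - s : ℕ) : ℝ) + 1) * (((t - s : ℕ) : ℝ) + 2) *
          ((β - lam (s - 1)) ^ 2 / lam (s - 1) ^ 2) * ‖x s - x (s - 1)‖ ^ 2 := by
  have hα1' : (0:ℝ) ≤ 1 - α := by linarith
  -- explicit formula
  have key : ∀ t, y t - x t = ∑ s ∈ Finset.Icc 1 t,
      ((1 - α) ^ (t - s) * ((β - lam (s-1)) / lam (s-1))) • (x s - x (s-1)) := by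
    intro t
    induction t with
    | zero => simp [h0]
    | succ n ih =>
      have step : y (n+1) - x (n+1)
          = (1 - α) • (y n - x n) + ((β - lam n) / lam n) • (x (n+1) - x n) := by
        rw [hy n, hz n]
        have hl : lam n ≠ 0 := (hlam n).ne'
        have hb : (β / lam n) • (x (n+1) - x n) - (x (n+1) - x n)
            = ((β - lam n) / lam n) • (x (n+1) - x n) := by
          rw [sub_div, div_self hl, sub_smul, one_smul]
        have : (1 - α) • y n + α • x n - x n = (1 - α) • (y n - x n) := by
          rw [smul_sub]
          module
        rw [show (1 - α) • y n + α • x n + (β / lam n) • (x (n+1) - x n) - x (n+1)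
            = ((1 - α) • y n + α • x n - x n) + ((β / lam n) • (x (n+1) - x n) - (x (n+1) - x n)) by abel]
        rw [this, hb]
      rw [step, ih, Finset.sum_Icc_succ_top (by omega : 1 ≤ n + 1), Finset.smul_sum]
      congr 1
      · apply Finset.sum_congr rfl
        intro s hs
        simp only [Finset.mem_Icc] at hs
        rw [smul_smul]
        congr 1
        have hns : n + 1 - s = (n - s) + 1 := by omega
        rw [hns, pow_succ]
        ring
      · simp
  intro t
  rcases Nat.eq_zero_or_pos t with ht | ht
  · subst ht; simp [h0]
  set a : ℕ → ℝ := fun s => ‖((1 - α) ^ (t - s) * ((β - lam (s-1)) / lam (s-1))) • (x s - x (s-1))‖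
    with ha
  set u : ℕ → ℝ := fun s => (1:ℝ)/((((t - s : ℕ):ℝ)+1)*(((t - s : ℕ):ℝ)+2)) with hu
  have hupos : ∀ s, 0 < u s := by
    intro s
    apply div_pos one_pos
    positivity
  have step1 : ‖y t - x t‖ ≤ ∑ s ∈ Finset.Icc 1 t, a s := by
    rw [key t]; exact norm_sum_le _ _
  have hnn : 0 ≤ ∑ s ∈ Finset.Icc 1 t, a s :=
    Finset.sum_nonneg fun s _ => norm_nonneg _
  have step2 : ‖y t - x t‖ ^ 2 ≤ (∑ s ∈ Finset.Icc 1 t, a s) ^ 2 := by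
    apply pow_le_pow_left₀ (norm_nonneg _) step1
  -- Cauchy–Schwarz
  have cs : (∑ s ∈ Finset.Icc 1 t, a s) ^ 2
      ≤ (∑ s ∈ Finset.Icc 1 t, u s) * ∑ s ∈ Finset.Icc 1 t, (a s)^2 / u s := by
    have := Finset.sum_mul_sq_le_sq_mul_sq (Finset.Icc 1 t)
      (fun s => Real.sqrt (u s)) (fun s => a s / Real.sqrt (u s))
    have heq1 : ∀ s ∈ Finset.Icc 1 t,
        Real.sqrt (u s) * (a s / Real.sqrt (u s)) = a s := by
      intro s _
      have : Real.sqrt (u s) ≠ 0 := by positivity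
      field_simp
    have heq2 : ∀ s ∈ Finset.Icc 1 t, Real.sqrt (u s) ^ 2 = u s := by
      intro s _; exact Real.sq_sqrt (hupos s).le
    have heq3 : ∀ s ∈ Finset.Icc 1 t, (a s / Real.sqrt (u s)) ^ 2 = (a s)^2 / u s := by
      intro s _
      rw [div_pow, Real.sq_sqrt (hupos s).le]
    rw [Finset.sum_congr rfl heq1, Finset.sum_congr rfl heq2, Finset.sum_congr rfl heq3] at this
    exact this
  have husum : ∑ s ∈ Finset.Icc 1 t, u s = (t:ℝ)/((t:ℝ)+1) := by
    have := reindex_aux t (fun k => (1:ℝ)/(((k:ℝ)+1)*((k:ℝ)+2)))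
    simp only [hu]
    rw [this, tele_sum]
  have hterm : ∀ s ∈ Finset.Icc 1 t, (a s)^2 / u s
      = (1 - α) ^ (2 * (t - s)) * (((t - s : ℕ) : ℝ) + 1) * (((t - s : ℕ) : ℝ) + 2) *
          ((β - lam (s - 1)) ^ 2 / lam (s - 1) ^ 2) * ‖x s - x (s - 1)‖ ^ 2 := by
    intro s _
    have h1 : a s = |(1 - α) ^ (t - s) * ((β - lam (s-1)) / lam (s-1))| * ‖x s - x (s-1)‖ := by
      rw [ha]
      simp only [norm_smul, Real.norm_eq_abs]
    have h2 : (a s)^2 = (1 - α) ^ (2 * (t - s)) * ((β - lam (s-1))^2 / lam (s-1)^2)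
        * ‖x s - x (s-1)‖ ^ 2 := by
      rw [h1, mul_pow, sq_abs, mul_pow, ← pow_mul, div_pow]
      ring_nf
    rw [h2, hu]
    have hd : ((((t - s : ℕ):ℝ)+1)*(((t - s : ℕ):ℝ)+2)) ≠ 0 := by positivity
    field_simp
  calc ‖y t - x t‖ ^ 2 ≤ (∑ s ∈ Finset.Icc 1 t, a s) ^ 2 := step2
    _ ≤ (∑ s ∈ Finset.Icc 1 t, u s) * ∑ s ∈ Finset.Icc 1 t, (a s)^2 / u s := cs
    _ = (t:ℝ)/((t:ℝ)+1) * ∑ s ∈ Finset.Icc 1 t,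
        (1 - α) ^ (2 * (t - s)) * (((t - s : ℕ) : ℝ) + 1) * (((t - s : ℕ) : ℝ) + 2) *
          ((β - lam (s - 1)) ^ 2 / lam (s - 1) ^ 2) * ‖x s - x (s - 1)‖ ^ 2 := by
        rw [husum, Finset.sum_congr rfl hterm]
end
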